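/- Let λ ≥ 0, t ≥ 0, D = x+iy with D ≠ 0, λ = t, and suppose e, f ∈ ℂ∖{0} satisfy E = De/conj(e) ≠ conj(D) and ((|f|²/e) − 1)(conj(D)conj(e) − De)² = λ²(conj(f) − f)(conj(D)conj(e)f − De·conj(f)). Then e is real, and consequently E = D. -/

import Mathlib

/-- The forward direction of Corollary 2.7 specialized to `λ = t`: the
equivalence equation forces `e` to be real, and consequently `E = D`. -/
theorem stmt18 (lam : ℝ) (hlam : 0 ≤ lam) (D : ℂ) (hD0 : D ≠ 0)
    (e f : ℂ) (he : e ≠ 0) (hf : f ≠ 0)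
    (E : ℂ) (hE : E = D * e / (starRingEnd ℂ) e) (hEne : E ≠ (starRingEnd ℂ) D)
    (heq : ((Complex.normSq f : ℂ) / e - 1) *
        ((starRingEnd ℂ) D * (starRingEnd ℂ) e - D * e) ^ 2 =
      ((lam : ℂ)) ^ 2 * ((starRingEnd ℂ) f - f) *
        ((starRingEnd ℂ) D * (starRingEnd ℂ) e * f - D * e * (starRingEnd ℂ) f)) :
    e.im = 0 ∧ E = D := by
  have hce : (starRingEnd ℂ) e ≠ 0 := by
    simpa using he
  have hA : (starRingEnd ℂ) D * (starRingEnd ℂ) e - D * e ≠ 0 := by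
    intro h
    apply hEne
    rw [hE]
    rw [sub_eq_zero] at h
    field_simp [h]
    rw [← h]; ring
  -- conjugate the equation
  have heq2 := congrArg (starRingEnd ℂ) heq
  simp only [map_mul, map_sub, map_pow, map_div₀, Complex.conj_conj,
    Complex.conj_ofReal, map_one] at heq2
  have key : ((Complex.normSq f : ℂ) / e - 1) = ((Complex.normSq f : ℂ) / (starRingEnd ℂ) e - 1) := by
    apply mul_right_cancel₀ (pow_ne_zero 2 hA)
    rw [heq]
    linear_combination -heq2
  have hnf : (Complex.normSq f : ℂ) ≠ 0 := by
    simpa [Complex.normSq_eq_zero] using hf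
  have hee : (starRingEnd ℂ) e = e := by
    have h2 : (Complex.normSq f : ℂ) / e = (Complex.normSq f : ℂ) / (starRingEnd ℂ) e := by
      linear_combination key
    field_simp at h2
    exact h2
  refine ⟨(Complex.conj_eq_iff_im.mp hee), ?_⟩
  rw [hE, hee, mul_div_assoc, div_self he, mul_one]
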